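/- Let q ∈ (0,1) and for each q let a₀, (a⁺(i))_{i≥1} be i.i.d. G_q on [0,1] with mean q, independent of i.i.d. standard normals (Z⁺(u)) and Δ ≠ 0 fixed. Define B⁺ = { a₀ ≤ 2 a⁺(i) exp(Δ S⁺(i) − iΔ²/2) for some i ≥ 1 } where S⁺(i) = ∑_{u=1}^i Z⁺(u). If q^{−1} ∫_0^1 [1 − G_q(x)]² dx → 0 as q → 0, then q^{−1} E[a₀ · 1_{B⁺}] → 0 as q → 0. -/

import Mathlib

open MeasureTheory ProbabilityTheory

section AuxExtendedScan
open MeasureTheory ProbabilityTheory Real Finset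
open scoped ENNReal NNReal

lemma aux_pdf_mul (c x : ℝ) :
    Real.exp (c * x) * gaussianPDFReal 0 1 x
      = Real.exp (c ^ 2 / 2) * gaussianPDFReal c 1 x := by
  simp only [gaussianPDFReal, NNReal.coe_one, mul_one, sub_zero]
  rw [mul_left_comm, mul_left_comm (Real.exp (c ^ 2 / 2)), ← Real.exp_add, ← Real.exp_add]
  congr 2
  ring

lemma aux_integrable_exp_gauss (c : ℝ) :
    Integrable (fun x => Real.exp (c * x)) (gaussianReal 0 1) := by
  rw [gaussianReal_of_var_ne_zero 0 one_ne_zero]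
  rw [integrable_withDensity_iff (measurable_gaussianPDF 0 1)
    (Filter.Eventually.of_forall fun x => ENNReal.ofReal_lt_top)]
  have : (fun x => Real.exp (c * x) * (gaussianPDF 0 1 x).toReal)
      = fun x => Real.exp (c ^ 2 / 2) * gaussianPDFReal c 1 x := by
    funext x
    rw [gaussianPDF, ENNReal.toReal_ofReal (gaussianPDFReal_nonneg 0 1 x), aux_pdf_mul]
  rw [this]
  exact (integrable_gaussianPDFReal c 1).const_mul _

lemma aux_integral_exp_gauss (c : ℝ) :
    ∫ x, Real.exp (c * x) ∂(gaussianReal 0 1) = Real.exp (c ^ 2 / 2) := by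
  rw [gaussianReal_of_var_ne_zero 0 one_ne_zero]
  have hpdf : gaussianPDF 0 1 = fun x => ((Real.toNNReal (gaussianPDFReal 0 1 x) : ℝ≥0) : ℝ≥0∞) := rfl
  rw [hpdf, integral_withDensity_eq_integral_smul
    (measurable_gaussianPDFReal 0 1).real_toNNReal]
  have : (fun x => Real.toNNReal (gaussianPDFReal 0 1 x) • Real.exp (c * x))
      = fun x => Real.exp (c ^ 2 / 2) * gaussianPDFReal c 1 x := by
    funext x
    rw [NNReal.smul_def, Real.coe_toNNReal _ (gaussianPDFReal_nonneg 0 1 x), smul_eq_mul,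
      mul_comm, aux_pdf_mul]
  rw [this, integral_const_mul, integral_gaussianPDFReal_eq_one c one_ne_zero, mul_one]

lemma aux_exp_map {Ω : Type*} [MeasurableSpace Ω] {μ : Measure Ω} {Z : Ω → ℝ}
    (hZ : Measurable Z) (hmap : μ.map Z = gaussianReal 0 1) (c : ℝ) :
    Integrable (fun ω => Real.exp (c * Z ω)) μ ∧
      ∫ ω, Real.exp (c * Z ω) ∂μ = Real.exp (c ^ 2 / 2) := by
  have hm : AEStronglyMeasurable (fun x : ℝ => Real.exp (c * x)) (Measure.map Z μ) :=
    Measurable.aestronglyMeasurable ((measurable_const.mul measurable_id).exp)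
  constructor
  · have h := aux_integrable_exp_gauss c
    rw [← hmap] at h
    exact (integrable_map_measure hm hZ.aemeasurable).mp h
  · have h := aux_integral_exp_gauss c
    rw [← hmap, integral_map hZ.aemeasurable hm] at h
    exact h

lemma aux_prod_exp {Ω : Type} [MeasurableSpace Ω] {μ : Measure Ω} [IsProbabilityMeasure μ]
    {ι : Type} {f : ι → Ω → ℝ}
    (hindep : iIndepFun f μ)
    (hmeas : ∀ j, Measurable (f j)) (e : ℕ → ι) (he : Function.Injective e) (c : ℝ)
    (hdist : ∀ u, μ.map (f (e u)) = gaussianReal 0 1) (k : ℕ) :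
    Integrable (fun ω => ∏ u ∈ Finset.range k, Real.exp (c * f (e u) ω)) μ ∧
    ∫ ω, ∏ u ∈ Finset.range k, Real.exp (c * f (e u) ω) ∂μ
      = Real.exp (c ^ 2 / 2) ^ k := by
  classical
  induction k with
  | zero => simp
  | succ k ih =>
    set g : ι → Ω → ℝ := fun j ω => Real.exp (c * f j ω) with hg
    have hgmeas : ∀ j, Measurable (g j) := fun j => (measurable_const.mul (hmeas j)).exp
    have hgindep : iIndepFun g μ :=
      hindep.comp (fun _ x => Real.exp (c * x))
        (fun _ => (measurable_const.mul measurable_id).exp)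
    have hnotmem : e k ∉ (Finset.range k).image e := by
      simp only [Finset.mem_image, Finset.mem_range]
      rintro ⟨u, hu, hue⟩
      exact absurd (he hue) (Nat.ne_of_lt hu)
    have hip := hgindep.indepFun_finset_prod_of_notMem hgmeas hnotmem
    have hprod_eq : (∏ j ∈ (Finset.range k).image e, g j)
        = fun ω => ∏ u ∈ Finset.range k, Real.exp (c * f (e u) ω) := by
      funext ω
      rw [Finset.prod_apply, Finset.prod_image (fun x _ y _ h => he h)]
    rw [hprod_eq] at hip
    have hbase := aux_exp_map (hmeas (e k)) (hdist k) c
    constructor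
    · have := hip.integrable_mul ih.1 hbase.1
      have heq : (fun ω => ∏ u ∈ Finset.range (k+1), Real.exp (c * f (e u) ω))
          = (fun ω => ∏ u ∈ Finset.range k, Real.exp (c * f (e u) ω)) * (g (e k)) := by
        funext ω; simp [Finset.prod_range_succ, hg]
      rw [heq]; exact this
    · have heq : ∀ ω, ∏ u ∈ Finset.range (k+1), Real.exp (c * f (e u) ω)
          = (∏ u ∈ Finset.range k, Real.exp (c * f (e u) ω)) * g (e k) ω := by
        intro ω; simp [Finset.prod_range_succ, hg]
      simp_rw [heq]
      rw [hip.integral_fun_mul_eq_mul_integral ih.1.aestronglyMeasurable hbase.1.aestronglyMeasurable,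
        ih.2, hbase.2]
      exact (pow_succ _ k).symm

lemma aux_exp_sum {Ω : Type} [MeasurableSpace Ω] {μ : Measure Ω} [IsProbabilityMeasure μ]
    {ι : Type} {f : ι → Ω → ℝ}
    (hindep : iIndepFun f μ)
    (hmeas : ∀ j, Measurable (f j)) (e : ℕ → ι) (he : Function.Injective e) (c : ℝ)
    (hdist : ∀ u, μ.map (f (e u)) = gaussianReal 0 1) (k : ℕ) :
    Integrable (fun ω => Real.exp (c * ∑ u ∈ Finset.range k, f (e u) ω)) μ ∧
    ∫ ω, Real.exp (c * ∑ u ∈ Finset.range k, f (e u) ω) ∂μ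
      = Real.exp ((k : ℝ) * c ^ 2 / 2) := by
  have hpt : ∀ ω, Real.exp (c * ∑ u ∈ Finset.range k, f (e u) ω)
      = ∏ u ∈ Finset.range k, Real.exp (c * f (e u) ω) := by
    intro ω; rw [Finset.mul_sum, Real.exp_sum]
  have h := aux_prod_exp hindep hmeas e he c hdist k
  simp_rw [hpt]
  refine ⟨h.1, ?_⟩
  rw [h.2, ← Real.exp_nat_mul]
  ring_nf

lemma aux_int_bdd {Ω : Type} [MeasurableSpace Ω] {μ : Measure Ω} [IsProbabilityMeasure μ]
    {g : Ω → ℝ} (h : Measurable g) (hr : ∀ ω, g ω ∈ Set.Icc (0:ℝ) 1) :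
    Integrable g μ := by
  refine (integrable_const (1:ℝ)).mono' h.aestronglyMeasurable
    (Filter.Eventually.of_forall fun ω => ?_)
  rw [Real.norm_eq_abs, abs_of_nonneg (hr ω).1]
  exact (hr ω).2

lemma aux_boundB {Ω : Type} [MeasurableSpace Ω] {μ : Measure Ω} [IsProbabilityMeasure μ]
    (Δ q : ℝ) (i : ℕ) (a b S : Ω → ℝ)
    (ha : Measurable a) (hb : Measurable b) (hS : Measurable S)
    (har : ∀ ω, a ω ∈ Set.Icc (0:ℝ) 1) (hbr : ∀ ω, b ω ∈ Set.Icc (0:ℝ) 1)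
    (hind : IndepFun (fun ω => (a ω, b ω)) S μ)
    (hEa : ∫ ω, a ω ∂μ = q) (hEb : ∫ ω, b ω ∂μ = q)
    (hVint : Integrable (fun ω => Real.exp (Δ / 2 * S ω)) μ)
    (hV : ∫ ω, Real.exp (Δ / 2 * S ω) ∂μ = Real.exp ((i:ℝ) * Δ ^ 2 / 8)) :
    ∫ ω in {ω | a ω ≤ 2 * b ω * Real.exp (Δ * S ω - (i:ℝ) * Δ ^ 2 / 2)}, a ω ∂μ
      ≤ Real.sqrt 2 * q * Real.exp (-(Δ ^ 2) / 8) ^ i := by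
  have hq0 : 0 ≤ q := hEa ▸ integral_nonneg (fun ω => (har ω).1)
  set B : Set Ω := {ω | a ω ≤ 2 * b ω * Real.exp (Δ * S ω - (i:ℝ) * Δ ^ 2 / 2)} with hB
  have hBmeas : MeasurableSet B :=
    measurableSet_le ha ((measurable_const.mul hb).mul (((hS.const_mul Δ).sub_const _).exp))
  set U : Ω → ℝ := fun ω => Real.sqrt (a ω) * Real.sqrt (b ω) with hU
  set V : Ω → ℝ := fun ω => Real.exp (Δ / 2 * S ω) with hV'
  have hUmeas : Measurable U := ha.sqrt.mul hb.sqrt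
  have hVmeas : Measurable V := (hS.const_mul _).exp
  set g : Ω → ℝ := fun ω => Real.sqrt 2 * Real.exp (-((i:ℝ) * Δ ^ 2) / 4) * (U ω * V ω) with hg
  -- pointwise bound on B
  have hpt : ∀ ω ∈ B, a ω ≤ g ω := by
    intro ω hω
    have h0a := (har ω).1
    have h0b := (hbr ω).1
    have hsq : Real.sqrt (Real.exp (Δ * S ω - (i:ℝ) * Δ ^ 2 / 2))
        = Real.exp (-((i:ℝ) * Δ ^ 2) / 4) * Real.exp (Δ / 2 * S ω) := by
      rw [← Real.exp_add,
        show Δ * S ω - (i:ℝ) * Δ ^ 2 / 2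
          = (-((i:ℝ) * Δ ^ 2) / 4 + Δ / 2 * S ω) + (-((i:ℝ) * Δ ^ 2) / 4 + Δ / 2 * S ω)
          from by ring,
        Real.exp_add, Real.sqrt_mul_self (Real.exp_nonneg _)]
    have h1 : a ω ≤ Real.sqrt (a ω) * Real.sqrt (2 * b ω * Real.exp (Δ * S ω - (i:ℝ) * Δ ^ 2 / 2)) := by
      calc a ω = Real.sqrt (a ω) * Real.sqrt (a ω) := (Real.mul_self_sqrt h0a).symm
      _ ≤ _ := mul_le_mul_of_nonneg_left (Real.sqrt_le_sqrt hω) (Real.sqrt_nonneg _)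
    rw [Real.sqrt_mul (by positivity), Real.sqrt_mul (by norm_num : (0:ℝ) ≤ 2), hsq] at h1
    calc a ω ≤ _ := h1
    _ = g ω := by simp only [hg, hU, hV']; ring
  -- integrability
  have hUbdd : ∀ ω, ‖U ω‖ ≤ 1 := by
    intro ω
    rw [Real.norm_eq_abs, abs_of_nonneg (by positivity)]
    calc Real.sqrt (a ω) * Real.sqrt (b ω)
        ≤ 1 * 1 := mul_le_mul (Real.sqrt_le_one.mpr (har ω).2) (Real.sqrt_le_one.mpr (hbr ω).2)
          (Real.sqrt_nonneg _) zero_le_one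
    _ = 1 := one_mul 1
  have hUVint : Integrable (fun ω => U ω * V ω) μ :=
    hVint.bdd_mul hUmeas.aestronglyMeasurable (Filter.Eventually.of_forall hUbdd)
  have hgint : Integrable g μ := hUVint.const_mul _
  have haint : Integrable a μ := aux_int_bdd ha har
  -- chain
  have h1 : ∫ ω in B, a ω ∂μ ≤ ∫ ω in B, g ω ∂μ :=
    setIntegral_mono_on haint.integrableOn hgint.integrableOn hBmeas hpt
  have h2 : ∫ ω in B, g ω ∂μ ≤ ∫ ω, g ω ∂μ :=
    setIntegral_le_integral hgint (Filter.Eventually.of_forall fun ω => by positivity)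
  -- independence
  have hUVindep : IndepFun U V μ := by
    have := hind.comp (φ := fun p : ℝ × ℝ => Real.sqrt p.1 * Real.sqrt p.2)
      (ψ := fun s : ℝ => Real.exp (Δ / 2 * s))
      (measurable_fst.sqrt.mul measurable_snd.sqrt) ((measurable_id.const_mul _).exp)
    exact this
  have hgval : ∫ ω, g ω ∂μ
      = Real.sqrt 2 * Real.exp (-((i:ℝ) * Δ ^ 2) / 4) * ((∫ ω, U ω ∂μ) * ∫ ω, V ω ∂μ) := by
    rw [hg, integral_const_mul,
      hUVindep.integral_fun_mul_eq_mul_integral hUmeas.aestronglyMeasurable hVmeas.aestronglyMeasurable]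
  -- bound on ∫ U
  have hbint : Integrable b μ := aux_int_bdd hb (hbr ·)
  have hUle : ∫ ω, U ω ∂μ ≤ q := by
    have hmono : ∀ ω, U ω ≤ (a ω + b ω) / 2 := by
      intro ω
      have h0a := (har ω).1
      have h0b := (hbr ω).1
      simp only [hU]
      nlinarith [sq_nonneg (Real.sqrt (a ω) - Real.sqrt (b ω)), Real.sq_sqrt h0a,
        Real.sq_sqrt h0b, Real.sqrt_nonneg (a ω), Real.sqrt_nonneg (b ω)]
    calc ∫ ω, U ω ∂μ ≤ ∫ ω, (a ω + b ω) / 2 ∂μ :=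
        integral_mono (aux_int_bdd hUmeas (fun ω => ⟨by positivity, by
          have := hUbdd ω; rwa [Real.norm_eq_abs, abs_of_nonneg (by positivity)] at this⟩))
          ((haint.add hbint).div_const 2) hmono
    _ = q := by rw [integral_div, integral_add haint hbint, hEa, hEb]; ring
  have hU0 : 0 ≤ ∫ ω, U ω ∂μ := integral_nonneg fun ω => by positivity
  -- final computation
  have hfin : Real.sqrt 2 * Real.exp (-((i:ℝ) * Δ ^ 2) / 4) * (q * Real.exp ((i:ℝ) * Δ ^ 2 / 8))
      = Real.sqrt 2 * q * Real.exp (-(Δ ^ 2) / 8) ^ i := by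
    rw [← Real.exp_nat_mul,
      show (i:ℝ) * (-(Δ ^ 2) / 8) = -((i:ℝ) * Δ ^ 2) / 4 + (i:ℝ) * Δ ^ 2 / 8 from by ring,
      Real.exp_add]
    ring
  calc ∫ ω in B, a ω ∂μ ≤ ∫ ω, g ω ∂μ := le_trans h1 h2
  _ = Real.sqrt 2 * Real.exp (-((i:ℝ) * Δ ^ 2) / 4) * ((∫ ω, U ω ∂μ) * ∫ ω, V ω ∂μ) := hgval
  _ ≤ Real.sqrt 2 * Real.exp (-((i:ℝ) * Δ ^ 2) / 4) * (q * Real.exp ((i:ℝ) * Δ ^ 2 / 8)) := by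
    rw [hV']  -- make V explicit?
    rw [hV]
    have : (∫ ω, U ω ∂μ) * Real.exp ((i:ℝ) * Δ ^ 2 / 8) ≤ q * Real.exp ((i:ℝ) * Δ ^ 2 / 8) :=
      mul_le_mul_of_nonneg_right hUle (Real.exp_nonneg _)
    have hC : (0:ℝ) ≤ Real.sqrt 2 * Real.exp (-((i:ℝ) * Δ ^ 2) / 4) := by positivity
    exact mul_le_mul_of_nonneg_left this hC
  _ = _ := hfin

lemma aux_boundA {Ω : Type} [MeasurableSpace Ω] {μ : Measure Ω} [IsProbabilityMeasure μ]
    (Δ : ℝ) (i : ℕ) (a b S : Ω → ℝ)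
    (ha : Measurable a) (hb : Measurable b) (hS : Measurable S)
    (har : ∀ ω, a ω ∈ Set.Icc (0:ℝ) 1) (hbr : ∀ ω, b ω ∈ Set.Icc (0:ℝ) 1)
    (hind : IndepFun (fun ω => (a ω, b ω)) S μ)
    (hindab : IndepFun a b μ)
    (hmapb : μ.map b = μ.map a)
    (hWint : Integrable (fun ω => Real.exp (Δ * S ω)) μ)
    (hWval : ∫ ω, Real.exp (Δ * S ω) ∂μ = Real.exp ((i:ℝ) * Δ ^ 2 / 2))
    (G : ℝ → ℝ) (hG : ∀ x, G x = (μ {ω | a ω ≤ x}).toReal) :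
    ∫ ω in {ω | a ω ≤ 2 * b ω * Real.exp (Δ * S ω - (i:ℝ) * Δ ^ 2 / 2)}, a ω ∂μ
      ≤ 3 * ∫ x in (0:ℝ)..1, (1 - G x) ^ 2 := by
  set B : Set Ω := {ω | a ω ≤ 2 * b ω * Real.exp (Δ * S ω - (i:ℝ) * Δ ^ 2 / 2)} with hB
  have hBmeas : MeasurableSet B :=
    measurableSet_le ha ((measurable_const.mul hb).mul (((hS.const_mul Δ).sub_const _).exp))
  set W2 : Ω → ℝ := fun ω => Real.exp (Δ * S ω - (i:ℝ) * Δ ^ 2 / 2) with hW2def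
  have hW2eq : W2 = fun ω => Real.exp (-((i:ℝ) * Δ ^ 2 / 2)) * Real.exp (Δ * S ω) := by
    funext ω
    simp only [hW2def]
    rw [← Real.exp_add]
    congr 1
    ring
  have hW2int : Integrable W2 μ := by rw [hW2eq]; exact hWint.const_mul _
  have hW2meas : Measurable W2 := ((hS.const_mul Δ).sub_const _).exp
  set M : Ω → ℝ := fun ω => min (a ω) (b ω) with hM
  set W : Ω → ℝ := fun ω => max 1 (2 * W2 ω) with hW
  have hMmeas : Measurable M := ha.min hb
  have hWmeas : Measurable W := measurable_const.max (hW2meas.const_mul 2)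
  have hMrange : ∀ ω, M ω ∈ Set.Icc (0:ℝ) 1 := fun ω =>
    ⟨le_min (har ω).1 (hbr ω).1, (min_le_left _ _).trans (har ω).2⟩
  have hMint : Integrable M μ := aux_int_bdd hMmeas hMrange
  -- pointwise bound
  have hpt : ∀ ω ∈ B, a ω ≤ M ω * W ω := by
    intro ω hω
    have hE : 0 < W2 ω := Real.exp_pos _
    rcases le_total (a ω) (b ω) with h' | h'
    · have : M ω = a ω := min_eq_left h'
      rw [this]
      have h1 : 1 ≤ W ω := le_max_left _ _
      nlinarith [(har ω).1]
    · have : M ω = b ω := min_eq_right h'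
      rw [this]
      calc a ω ≤ 2 * b ω * W2 ω := hω
      _ = b ω * (2 * W2 ω) := by ring
      _ ≤ b ω * W ω := mul_le_mul_of_nonneg_left (le_max_right _ _) (hbr ω).1
  -- integrability of W and M * W
  have hWbd : ∀ ω, ‖W ω‖ ≤ 1 + 2 * W2 ω := by
    intro ω
    have hE : 0 < W2 ω := Real.exp_pos _
    rw [Real.norm_eq_abs, abs_of_nonneg (le_trans zero_le_one (le_max_left _ _))]
    apply max_le <;> nlinarith
  have h12int : Integrable (fun ω => 1 + 2 * W2 ω) μ :=
    (integrable_const 1).add (hW2int.const_mul 2)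
  have hWint' : Integrable W μ :=
    h12int.mono' hWmeas.aestronglyMeasurable (Filter.Eventually.of_forall hWbd)
  have hMbd : ∀ ω, ‖M ω‖ ≤ 1 := fun ω => by
    rw [Real.norm_eq_abs, abs_of_nonneg (hMrange ω).1]; exact (hMrange ω).2
  have hMWint : Integrable (fun ω => M ω * W ω) μ :=
    hWint'.bdd_mul hMmeas.aestronglyMeasurable (Filter.Eventually.of_forall hMbd)
  -- independence
  have hMWindep : IndepFun M W μ := by
    have := hind.comp (φ := fun p : ℝ × ℝ => min p.1 p.2)
      (ψ := fun s : ℝ => max 1 (2 * Real.exp (Δ * s - (i:ℝ) * Δ ^ 2 / 2)))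
      (measurable_fst.min measurable_snd)
      (measurable_const.max ((((measurable_id.const_mul Δ).sub_const _).exp).const_mul 2))
    exact this
  -- chain
  have h1 : ∫ ω in B, a ω ∂μ ≤ ∫ ω in B, M ω * W ω ∂μ :=
    setIntegral_mono_on (aux_int_bdd ha har).integrableOn hMWint.integrableOn hBmeas hpt
  have h2 : ∫ ω in B, M ω * W ω ∂μ ≤ ∫ ω, M ω * W ω ∂μ :=
    setIntegral_le_integral hMWint (Filter.Eventually.of_forall fun ω =>
      mul_nonneg (hMrange ω).1 (le_trans zero_le_one (le_max_left _ _)))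
  have h3 : ∫ ω, M ω * W ω ∂μ = (∫ ω, M ω ∂μ) * ∫ ω, W ω ∂μ :=
    hMWindep.integral_fun_mul_eq_mul_integral hMmeas.aestronglyMeasurable hWmeas.aestronglyMeasurable
  -- bound on ∫ W
  have hWle : ∫ ω, W ω ∂μ ≤ 3 := by
    have hWptle : ∀ ω, W ω ≤ 1 + 2 * W2 ω := by
      intro ω
      have hE : 0 < W2 ω := Real.exp_pos _
      apply max_le <;> nlinarith
    have hW2val : ∫ ω, W2 ω ∂μ = 1 := by
      rw [hW2eq, integral_const_mul, hWval, ← Real.exp_add]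
      simp
    calc ∫ ω, W ω ∂μ ≤ ∫ ω, 1 + 2 * W2 ω ∂μ := integral_mono hWint' h12int hWptle
    _ = 1 + 2 * ∫ ω, W2 ω ∂μ := by
      rw [integral_add (integrable_const 1) (hW2int.const_mul 2), integral_const,
        integral_const_mul]
      simp
    _ = 3 := by rw [hW2val]; norm_num
  have hW0 : 0 ≤ ∫ ω, W ω ∂μ :=
    integral_nonneg fun ω => le_trans zero_le_one (le_max_left _ _)
  have hK0 : (0:ℝ) ≤ ∫ x in (0:ℝ)..1, (1 - G x) ^ 2 :=
    intervalIntegral.integral_nonneg zero_le_one fun x _ => sq_nonneg _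
  -- layer cake: ∫ M ≤ K
  have hMK : ∫ ω, M ω ∂μ ≤ ∫ x in (0:ℝ)..1, (1 - G x) ^ 2 := by
    rw [hMint.integral_eq_integral_meas_lt
      (Filter.Eventually.of_forall fun ω => (hMrange ω).1)]
    have key : Set.EqOn (fun t => (μ {ω | t < M ω}).toReal)
        (Set.indicator (Set.Ioc (0:ℝ) 1) (fun x => (1 - G x) ^ 2)) (Set.Ioi 0) := by
      intro t ht
      show (μ {ω | t < M ω}).toReal = _
      by_cases h1 : t ≤ 1
      · rw [Set.indicator_of_mem (show t ∈ Set.Ioc (0:ℝ) 1 from ⟨ht, h1⟩)]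
        have hset : {ω | t < M ω} = a ⁻¹' (Set.Ioi t) ∩ b ⁻¹' (Set.Ioi t) := by
          ext ω; simp [hM, lt_min_iff]
        have hbb : μ (b ⁻¹' Set.Ioi t) = μ (a ⁻¹' Set.Ioi t) := by
          rw [← Measure.map_apply hb measurableSet_Ioi,
            ← Measure.map_apply ha measurableSet_Ioi, hmapb]
        have hcompl : a ⁻¹' Set.Ioi t = {ω | a ω ≤ t}ᶜ := by
          ext ω; simp [not_le]
        have hmle : MeasurableSet {ω | a ω ≤ t} := ha measurableSet_Iic
        have hμa : μ (a ⁻¹' Set.Ioi t) = 1 - μ {ω | a ω ≤ t} := by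
          rw [hcompl, measure_compl hmle (measure_ne_top μ _), measure_univ]
        have htr : (μ (a ⁻¹' Set.Ioi t)).toReal = 1 - G t := by
          rw [hμa, ENNReal.toReal_sub_of_le prob_le_one ENNReal.one_ne_top, ENNReal.toReal_one,
            hG]
        rw [hset, hindab.measure_inter_preimage_eq_mul _ _ measurableSet_Ioi measurableSet_Ioi,
          hbb, ENNReal.toReal_mul, htr]
        ring
      · push_neg at h1
        rw [Set.indicator_of_notMem (by simp only [Set.mem_Ioc, not_and, not_le]; exact fun _ => h1)]
        have : {ω | t < M ω} = ∅ := by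
          ext ω
          simp only [Set.mem_setOf_eq, Set.mem_empty_iff_false, iff_false, not_lt, hM]
          exact le_trans (min_le_left _ _) (le_trans (har ω).2 h1.le)
        rw [this, measure_empty]
        simp
    simp only [measureReal_def]
    rw [setIntegral_congr_fun measurableSet_Ioi key,
      setIntegral_indicator measurableSet_Ioc,
      Set.inter_eq_right.mpr Set.Ioc_subset_Ioi_self,
      intervalIntegral.integral_of_le zero_le_one]
  have hM0 : 0 ≤ ∫ ω, M ω ∂μ := integral_nonneg fun ω => (hMrange ω).1
  have hfinal : ∫ ω in B, a ω ∂μ ≤ (∫ ω, M ω ∂μ) * ∫ ω, W ω ∂μ := by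
    rw [← h3]; exact le_trans h1 h2
  calc ∫ ω in B, a ω ∂μ ≤ (∫ ω, M ω ∂μ) * ∫ ω, W ω ∂μ := hfinal
  _ ≤ (∫ x in (0:ℝ)..1, (1 - G x) ^ 2) * 3 := mul_le_mul hMK hWle hW0 hK0
  _ = _ := by ring

lemma aux_main {Ω : Type} [MeasurableSpace Ω] {μ : Measure Ω} [IsProbabilityMeasure μ]
    (Δ q : ℝ) (hΔ : Δ ≠ 0) (hq : 0 < q)
    (a : Ω → ℝ) (b Z : ℕ → Ω → ℝ)
    (ha : Measurable a) (hb : ∀ i, Measurable (b i)) (hZ : ∀ u, Measurable (Z u))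
    (hindep : iIndepFun
      (Sum.elim (fun _ : Unit => a) (Sum.elim b Z)) μ)
    (har : ∀ ω, a ω ∈ Set.Icc (0:ℝ) 1) (hbr : ∀ i ω, b i ω ∈ Set.Icc (0:ℝ) 1)
    (hiid : ∀ i, μ.map (b i) = μ.map a)
    (hmean : ∫ ω, a ω ∂μ = q)
    (hZd : ∀ u, μ.map (Z u) = gaussianReal 0 1)
    (G : ℝ → ℝ) (hG : ∀ x, G x = (μ {ω | a ω ≤ x}).toReal)
    (i₀ : ℕ) :
    ∫ ω in {ω | ∃ i : ℕ, 1 ≤ i ∧ a ω ≤ 2 * b i ω *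
        Real.exp (Δ * (∑ u ∈ Finset.range i, Z u ω) - (i : ℝ) * Δ ^ 2 / 2)}, a ω ∂μ
      ≤ (i₀ : ℝ) * (3 * ∫ x in (0:ℝ)..1, (1 - G x) ^ 2)
        + Real.sqrt 2 * q * (Real.exp (-(Δ ^ 2) / 8) ^ (i₀ + 1)
            * (1 - Real.exp (-(Δ ^ 2) / 8))⁻¹) := by
  classical
  set f : (Unit ⊕ (ℕ ⊕ ℕ)) → Ω → ℝ := Sum.elim (fun _ : Unit => a) (Sum.elim b Z) with hf
  have hfmeas : ∀ j, Measurable (f j) := by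
    rintro (j | j | j)
    · exact ha
    · exact hb j
    · exact hZ j
  set r : ℝ := Real.exp (-(Δ ^ 2) / 8) with hrdef
  have hr0 : 0 < r := Real.exp_pos _
  have hr1 : r < 1 := by
    rw [hrdef, Real.exp_lt_one_iff]
    have : 0 < Δ ^ 2 := by positivity
    linarith
  set K : ℝ := ∫ x in (0:ℝ)..1, (1 - G x) ^ 2 with hKdef
  have hK0 : 0 ≤ K :=
    intervalIntegral.integral_nonneg zero_le_one fun x _ => sq_nonneg _
  set B : ℕ → Set Ω := fun i => {ω | a ω ≤ 2 * b i ω *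
    Real.exp (Δ * (∑ u ∈ Finset.range i, Z u ω) - (i : ℝ) * Δ ^ 2 / 2)} with hBdef
  have hSmeas : ∀ i, Measurable (fun ω => ∑ u ∈ Finset.range i, Z u ω) :=
    fun i => Finset.measurable_sum _ (fun u _ => hZ u)
  have hBmeas : ∀ i, MeasurableSet (B i) := fun i =>
    measurableSet_le ha ((measurable_const.mul (hb i)).mul
      ((((hSmeas i).const_mul Δ).sub_const _).exp))
  have haint : Integrable a μ := aux_int_bdd ha har
  -- independence of (a, b i) and the partial sum
  have hAB_S : ∀ i : ℕ, IndepFun (fun ω => (a ω, b i ω))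
      (fun ω => ∑ u ∈ Finset.range i, Z u ω) μ := by
    intro i
    set Sfin : Finset (Unit ⊕ (ℕ ⊕ ℕ)) :=
      {Sum.inl (), Sum.inr (Sum.inl i)} with hSfin
    set Tfin : Finset (Unit ⊕ (ℕ ⊕ ℕ)) :=
      (Finset.range i).image (fun u => Sum.inr (Sum.inr u)) with hTfin
    have hdisj : Disjoint Sfin Tfin := by
      rw [Finset.disjoint_left]
      intro j hj hj'
      simp only [hSfin, Finset.mem_insert, Finset.mem_singleton] at hj
      simp only [hTfin, Finset.mem_image, Finset.mem_range] at hj'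
      obtain ⟨u, _, hu⟩ := hj'
      rcases hj with h | h <;> rw [h] at hu <;> simp at hu
    have h0 := hindep.indepFun_finset Sfin Tfin hdisj hfmeas
    have hmem1 : (Sum.inl () : Unit ⊕ (ℕ ⊕ ℕ)) ∈ Sfin := by simp [hSfin]
    have hmem2 : (Sum.inr (Sum.inl i) : Unit ⊕ (ℕ ⊕ ℕ)) ∈ Sfin := by simp [hSfin]
    set φ : (Sfin → ℝ) → ℝ × ℝ := fun v => (v ⟨Sum.inl (), hmem1⟩, v ⟨Sum.inr (Sum.inl i), hmem2⟩) with hφ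
    set ψ : (Tfin → ℝ) → ℝ := fun v => ∑ t : Tfin, v t with hψ
    have hφm : Measurable φ := (measurable_pi_apply _).prodMk (measurable_pi_apply _)
    have hψm : Measurable ψ :=
      Finset.measurable_sum _ (fun t _ => measurable_pi_apply t)
    have h1 := h0.comp hφm hψm
    have hre : ψ ∘ (fun ω (j : Tfin) => f j ω)
        = fun ω => ∑ u ∈ Finset.range i, Z u ω := by
      funext ω
      show ∑ t : Tfin, f (↑t) ω = _
      rw [Finset.sum_coe_sort Tfin (fun j => f j ω)]
      rw [hTfin, Finset.sum_image (by intro x _ y _ h; simpa using h)]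
      rfl
    rw [hre] at h1
    exact h1
  have hindab : ∀ i : ℕ, IndepFun a (b i) μ := by
    intro i
    have : IndepFun (f (Sum.inl ())) (f (Sum.inr (Sum.inl i))) μ :=
      hindep.indepFun (by simp)
    exact this
  have hEb : ∀ i : ℕ, ∫ ω, b i ω ∂μ = q := by
    intro i
    have h2 : ∫ ω, b i ω ∂μ = ∫ x, x ∂(μ.map (b i)) :=
      (integral_map (hb i).aemeasurable aestronglyMeasurable_id).symm
    have h3 : ∫ ω, a ω ∂μ = ∫ x, x ∂(μ.map a) :=
      (integral_map ha.aemeasurable aestronglyMeasurable_id).symm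
    rw [h2, hiid i, ← h3, hmean]
  have he_inj : Function.Injective (fun u : ℕ => (Sum.inr (Sum.inr u) : Unit ⊕ (ℕ ⊕ ℕ))) := by
    intro x y h; simpa using h
  have hZd' : ∀ u : ℕ, μ.map (f (Sum.inr (Sum.inr u))) = gaussianReal 0 1 := fun u => hZd u
  -- bound A
  have boundA : ∀ i : ℕ, ∫ ω in B i, a ω ∂μ ≤ 3 * K := by
    intro i
    have hes := aux_exp_sum hindep hfmeas _ he_inj Δ hZd' i
    exact aux_boundA Δ i a (b i) (fun ω => ∑ u ∈ Finset.range i, Z u ω)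
      ha (hb i) (hSmeas i) har (hbr i) (hAB_S i) (hindab i) (hiid i)
      hes.1 hes.2 G hG
  -- bound B
  have boundB : ∀ i : ℕ, ∫ ω in B i, a ω ∂μ ≤ Real.sqrt 2 * q * r ^ i := by
    intro i
    have hes := aux_exp_sum hindep hfmeas _ he_inj (Δ / 2) hZd' i
    have hval : ∫ ω, Real.exp (Δ / 2 * ∑ u ∈ Finset.range i, Z u ω) ∂μ
        = Real.exp ((i:ℝ) * Δ ^ 2 / 8) := by
      have := hes.2
      rw [show (i:ℝ) * (Δ / 2) ^ 2 / 2 = (i:ℝ) * Δ ^ 2 / 8 from by ring] at this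
      exact this
    exact aux_boundB Δ q i a (b i) (fun ω => ∑ u ∈ Finset.range i, Z u ω)
      ha (hb i) (hSmeas i) har (hbr i) (hAB_S i) hmean (hEb i) hes.1 hval
  -- union bound via withDensity
  set c : ℕ → ℝ := fun j => if j < i₀ then 3 * K else Real.sqrt 2 * q * r ^ (j + 1) with hcdef
  have hc0 : ∀ j, 0 ≤ c j := by
    intro j
    by_cases h : j < i₀ <;> simp only [hcdef, h, if_true, if_false] <;> positivity
  have hcb : ∀ j, ∫ ω in B (j + 1), a ω ∂μ ≤ c j := by
    intro j
    by_cases h : j < i₀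
    · simpa only [hcdef, h, if_true] using boundA (j + 1)
    · simpa only [hcdef, h, if_false] using boundB (j + 1)
  set ν : Measure Ω := μ.withDensity (fun ω => ENNReal.ofReal (a ω)) with hνdef
  have hν : ∀ s : Set Ω, MeasurableSet s → ν s = ENNReal.ofReal (∫ ω in s, a ω ∂μ) := by
    intro s hs
    rw [hνdef, withDensity_apply _ hs,
      ofReal_integral_eq_lintegral_ofReal haint.integrableOn
        (Filter.Eventually.of_forall fun ω => (har ω).1)]
  have hsummable : Summable c := by
    rw [← summable_nat_add_iff i₀]
    have : (fun j => c (j + i₀)) = fun j => (Real.sqrt 2 * q * r ^ (i₀ + 1)) * r ^ j := by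
      funext j
      have : ¬ (j + i₀ < i₀) := by omega
      simp only [hcdef, this, if_false]
      rw [show j + i₀ + 1 = (i₀ + 1) + j from by omega, pow_add]
      ring
    rw [this]
    exact (summable_geometric_of_lt_one hr0.le hr1).mul_left _
  have htsum : ∑' j, c j ≤ (i₀ : ℝ) * (3 * K)
      + Real.sqrt 2 * q * (r ^ (i₀ + 1) * (1 - r)⁻¹) := by
    rw [← hsummable.sum_add_tsum_nat_add i₀]
    have h1 : ∑ j ∈ Finset.range i₀, c j = (i₀ : ℝ) * (3 * K) := by
      have hcc : ∀ j ∈ Finset.range i₀, c j = 3 * K := fun j hj => by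
        simp only [hcdef, Finset.mem_range.mp hj, if_true]
      rw [Finset.sum_congr rfl hcc, Finset.sum_const, Finset.card_range, nsmul_eq_mul]
    have h2 : ∑' j, c (j + i₀) = Real.sqrt 2 * q * (r ^ (i₀ + 1) * (1 - r)⁻¹) := by
      have heq : (fun j => c (j + i₀)) = fun j => (Real.sqrt 2 * q * r ^ (i₀ + 1)) * r ^ j := by
        funext j
        have : ¬ (j + i₀ < i₀) := by omega
        simp only [hcdef, this, if_false]
        rw [show j + i₀ + 1 = (i₀ + 1) + j from by omega, pow_add]
        ring
      rw [heq, tsum_mul_left, tsum_geometric_of_lt_one hr0.le hr1]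
      ring
    rw [h1, h2]
  -- set equality
  set Bset : Set Ω := {ω | ∃ i : ℕ, 1 ≤ i ∧ a ω ≤ 2 * b i ω *
    Real.exp (Δ * (∑ u ∈ Finset.range i, Z u ω) - (i : ℝ) * Δ ^ 2 / 2)} with hBsetdef
  have hBset_eq : Bset = ⋃ j : ℕ, B (j + 1) := by
    ext ω
    simp only [hBsetdef, Set.mem_setOf_eq, Set.mem_iUnion, hBdef]
    constructor
    · rintro ⟨i, h1, h2⟩
      exact ⟨i - 1, by rwa [Nat.sub_add_cancel h1]⟩
    · rintro ⟨j, hj⟩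
      exact ⟨j + 1, Nat.le_add_left 1 j, hj⟩
  have hBsetmeas : MeasurableSet Bset := by
    rw [hBset_eq]; exact MeasurableSet.iUnion (fun j => hBmeas (j + 1))
  have hνBset : ν Bset ≤ ENNReal.ofReal (∑' j, c j) := by
    calc ν Bset ≤ ∑' j, ν (B (j + 1)) := by
          rw [hBset_eq]; exact measure_iUnion_le _
    _ ≤ ∑' j, ENNReal.ofReal (c j) := ENNReal.tsum_le_tsum (fun j => by
          rw [hν _ (hBmeas (j + 1))]
          exact ENNReal.ofReal_le_ofReal (hcb j))
    _ = ENNReal.ofReal (∑' j, c j) := (ENNReal.ofReal_tsum_of_nonneg hc0 hsummable).symm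
  have hfinal : ∫ ω in Bset, a ω ∂μ ≤ ∑' j, c j := by
    have h := hνBset
    rw [hν _ hBsetmeas] at h
    exact (ENNReal.ofReal_le_ofReal_iff (tsum_nonneg hc0)).mp h
  exact hfinal.trans htsum

end AuxExtendedScan

/-- For each `q ∈ (0,1)`, let `a₀, (a⁺(i))` be i.i.d. `G_q` on `[0,1]` with
mean `q`, independent of i.i.d. standard normals `(Z⁺(u))`, `Δ ≠ 0` fixed, and
`B⁺ = {a₀ ≤ 2 a⁺(i) exp(Δ S⁺(i) − iΔ²/2) for some i ≥ 1}`. If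
`q⁻¹ ∫_0^1 (1 − G_q(x))² dx → 0` as `q → 0⁺`, then `q⁻¹ E[a₀ 1_{B⁺}] → 0` as `q → 0⁺`. -/
theorem extended_scan_error_vanishes
    (Δ : ℝ) (hΔ : Δ ≠ 0)
    (Ω : ℝ → Type) (m : ∀ q, MeasurableSpace (Ω q)) (P : ∀ q, Measure (Ω q))
    (hP : ∀ q, IsProbabilityMeasure (P q))
    (a0 : ∀ q, Ω q → ℝ) (ap : ∀ q, ℕ → Ω q → ℝ) (Z : ∀ q, ℕ → Ω q → ℝ)
    (ha0meas : ∀ q, Measurable (a0 q))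
    (hapmeas : ∀ q i, Measurable (ap q i))
    (hZmeas : ∀ q u, Measurable (Z q u))
    (hindep : ∀ q ∈ Set.Ioo (0 : ℝ) 1,
      iIndepFun
        (Sum.elim (fun _ : Unit => a0 q) (Sum.elim (ap q) (Z q))) (P q))
    (ha0range : ∀ q ∈ Set.Ioo (0 : ℝ) 1, ∀ ω, a0 q ω ∈ Set.Icc (0 : ℝ) 1)
    (haprange : ∀ q ∈ Set.Ioo (0 : ℝ) 1, ∀ i ω, ap q i ω ∈ Set.Icc (0 : ℝ) 1)
    (hiid : ∀ q ∈ Set.Ioo (0 : ℝ) 1, ∀ i, (P q).map (ap q i) = (P q).map (a0 q))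
    (hmean : ∀ q ∈ Set.Ioo (0 : ℝ) 1, ∫ ω, a0 q ω ∂(P q) = q)
    (hZdist : ∀ q ∈ Set.Ioo (0 : ℝ) 1, ∀ u, (P q).map (Z q u) = gaussianReal 0 1)
    (G : ℝ → ℝ → ℝ)
    (hG : ∀ q ∈ Set.Ioo (0 : ℝ) 1, ∀ x, G q x = ((P q) {ω | a0 q ω ≤ x}).toReal)
    (hvanish : Filter.Tendsto (fun q : ℝ => q⁻¹ * ∫ x in (0 : ℝ)..1, (1 - G q x) ^ 2)
      (nhdsWithin 0 (Set.Ioi 0)) (nhds 0)) :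
    Filter.Tendsto (fun q : ℝ => q⁻¹ *
        ∫ ω in {ω | ∃ i : ℕ, 1 ≤ i ∧ a0 q ω ≤ 2 * ap q i ω *
          Real.exp (Δ * (∑ u ∈ Finset.range i, Z q u ω) - (i : ℝ) * Δ ^ 2 / 2)},
          a0 q ω ∂(P q))
      (nhdsWithin 0 (Set.Ioi 0)) (nhds 0) := by
  rw [NormedAddCommGroup.tendsto_nhds_zero] at hvanish ⊢
  intro ε hε
  set r : ℝ := Real.exp (-(Δ ^ 2) / 8) with hrdef
  have hr0 : 0 < r := Real.exp_pos _
  have hr1 : r < 1 := by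
    rw [hrdef, Real.exp_lt_one_iff]
    have : 0 < Δ ^ 2 := by positivity
    linarith
  -- choose i₀
  have htail : Filter.Tendsto (fun n : ℕ => Real.sqrt 2 * (r ^ (n + 1) * (1 - r)⁻¹))
      Filter.atTop (nhds 0) := by
    have h := tendsto_pow_atTop_nhds_zero_of_lt_one hr0.le hr1
    have heq : (fun n : ℕ => Real.sqrt 2 * (r ^ (n + 1) * (1 - r)⁻¹))
        = fun n : ℕ => (Real.sqrt 2 * r * (1 - r)⁻¹) * r ^ n := by
      funext n; rw [pow_succ]; ring
    rw [heq]
    simpa using h.const_mul (Real.sqrt 2 * r * (1 - r)⁻¹)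
  rw [NormedAddCommGroup.tendsto_nhds_zero] at htail
  obtain ⟨i₀, hi₀⟩ := (htail (ε / 2) (half_pos hε)).exists
  have hi₀' : Real.sqrt 2 * (r ^ (i₀ + 1) * (1 - r)⁻¹) < ε / 2 :=
    lt_of_le_of_lt (le_abs_self _) (by rwa [Real.norm_eq_abs] at hi₀)
  set δ : ℝ := ε / 2 / (3 * (i₀ : ℝ) + 1) with hδdef
  have hδpos : 0 < δ := by positivity
  filter_upwards [hvanish δ hδpos,
    Ioo_mem_nhdsGT_of_mem (show (0:ℝ) ∈ Set.Ico (0:ℝ) 1 from ⟨le_refl 0, one_pos⟩)]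
    with q hq1 hq2
  haveI : IsProbabilityMeasure (P q) := hP q
  have hmain := @aux_main (Ω q) (m q) (P q) (hP q) Δ q hΔ hq2.1
    (a0 q) (ap q) (Z q) (ha0meas q) (hapmeas q) (hZmeas q) (hindep q hq2)
    (ha0range q hq2) (haprange q hq2) (hiid q hq2) (hmean q hq2) (hZdist q hq2)
    (G q) (hG q hq2) i₀
  set K : ℝ := ∫ x in (0:ℝ)..1, (1 - G q x) ^ 2 with hKdef
  have hK0 : 0 ≤ K :=
    intervalIntegral.integral_nonneg zero_le_one fun x _ => sq_nonneg _
  set I : ℝ := ∫ ω in {ω | ∃ i : ℕ, 1 ≤ i ∧ a0 q ω ≤ 2 * ap q i ω *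
      Real.exp (Δ * (∑ u ∈ Finset.range i, Z q u ω) - (i : ℝ) * Δ ^ 2 / 2)},
      a0 q ω ∂(P q) with hIdef
  have hI0 : 0 ≤ I := integral_nonneg fun ω => (ha0range q hq2 ω).1
  have hqpos : 0 < q := hq2.1
  have hqinv : 0 ≤ q⁻¹ := inv_nonneg.mpr hqpos.le
  have hF0 : 0 ≤ q⁻¹ * I := mul_nonneg hqinv hI0
  rw [Real.norm_eq_abs, abs_of_nonneg hF0]
  have hKq : q⁻¹ * K < δ := lt_of_le_of_lt (le_abs_self _) (by rwa [Real.norm_eq_abs] at hq1)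
  have hKq0 : 0 ≤ q⁻¹ * K := mul_nonneg hqinv hK0
  have h3δ : 3 * (i₀ : ℝ) * δ ≤ ε / 2 := by
    have hpos : (0:ℝ) < 3 * (i₀ : ℝ) + 1 := by positivity
    rw [hδdef, ← mul_div_assoc, div_le_iff₀ hpos]
    nlinarith [hε.le]
  have heq : q⁻¹ * ((i₀ : ℝ) * (3 * K) + Real.sqrt 2 * q * (r ^ (i₀ + 1) * (1 - r)⁻¹))
      = 3 * (i₀ : ℝ) * (q⁻¹ * K) + Real.sqrt 2 * (r ^ (i₀ + 1) * (1 - r)⁻¹) := by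
    field_simp
  calc q⁻¹ * I ≤ q⁻¹ * ((i₀ : ℝ) * (3 * K) + Real.sqrt 2 * q * (r ^ (i₀ + 1) * (1 - r)⁻¹)) :=
      mul_le_mul_of_nonneg_left hmain hqinv
  _ = 3 * (i₀ : ℝ) * (q⁻¹ * K) + Real.sqrt 2 * (r ^ (i₀ + 1) * (1 - r)⁻¹) := heq
  _ < ε / 2 + ε / 2 := by
      have h1 : 3 * (i₀ : ℝ) * (q⁻¹ * K) ≤ 3 * (i₀ : ℝ) * δ :=
        mul_le_mul_of_nonneg_left hKq.le (by positivity)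
      have h2 := h1.trans h3δ
      linarith [hi₀']
  _ = ε := by ring
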